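/- Let p = q = 1 and consider b = [[r, n], [0, r⁻¹]] with r > 0 real and n ∈ ℂ (so b ∈ AN for SL(2,ℂ)). Then b is admissible if and only if r > 1 and r² + r⁻² − |n|² > 2. -/

import Mathlib

open Matrix Complex

noncomputable section

/-- J = diag(1, −1). -/
def J2 : Matrix (Fin 2) (Fin 2) ℂ := !![1, 0; 0, -1]

/-- SU(1,1): determinant one matrices with g* J g = J. -/
def SU11 : Set (Matrix (Fin 2) (Fin 2) ℂ) :=
  {g | g.det = 1 ∧ gᴴ * J2 * g = J2}

/-- M† = J M* J. -/
def dag2 (M : Matrix (Fin 2) (Fin 2) ℂ) : Matrix (Fin 2) (Fin 2) ℂ :=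
  J2 * Mᴴ * J2

/-- AN ⊂ SL(2,ℂ): upper triangular, determinant one, positive real diagonal. -/
def AN2 : Set (Matrix (Fin 2) (Fin 2) ℂ) :=
  {b | b.det = 1 ∧ b 1 0 = 0 ∧
    (0 < (b 0 0).re ∧ (b 0 0).im = 0) ∧ (0 < (b 1 1).re ∧ (b 1 1).im = 0)}

/-- Admissible elements of Q for SU(1,1): conjugates g⁻¹ diag(e^μ, e^{-μ}) g, μ > 0,
of exponentials of admissible traceless diagonals diag(μ, -μ). -/
def IsAdmissibleQ2 (s : Matrix (Fin 2) (Fin 2) ℂ) : Prop :=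
  ∃ g ∈ SU11, ∃ lam mu : ℝ, mu < lam ∧ lam + mu = 0 ∧
    s = g⁻¹ * !![(Real.exp lam : ℂ), 0; 0, (Real.exp mu : ℂ)] * g

/-- Admissible elements of AN for SU(1,1). -/
def IsAdmissibleAN2 (b : Matrix (Fin 2) (Fin 2) ℂ) : Prop :=
  b ∈ AN2 ∧ IsAdmissibleQ2 (dag2 b * b)

set_option maxHeartbeats 1000000 in
private lemma aux_J2sq : J2 * J2 = 1 := by
  unfold J2
  ext i j
  fin_cases i <;> fin_cases j <;>
    simp [Matrix.mul_apply, Fin.sum_univ_two, Matrix.one_apply]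

set_option maxHeartbeats 1000000 in
private lemma aux_sval (r : ℝ) (n : ℂ) :
    dag2 !![(r : ℂ), n; 0, ((r⁻¹ : ℝ) : ℂ)] * !![(r : ℂ), n; 0, ((r⁻¹ : ℝ) : ℂ)] =
    !![((r:ℂ))^2, r * n; -(r * (starRingEnd ℂ) n), ((r⁻¹:ℝ):ℂ)^2 - (normSq n : ℂ)] := by
  unfold dag2 J2
  ext i j
  fin_cases i <;> fin_cases j <;>
    simp [Matrix.mul_apply, Fin.sum_univ_two, Matrix.vecMul, dotProduct,
      Matrix.conjTranspose_apply, Complex.normSq_eq_conj_mul_self] <;> ring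

set_option maxHeartbeats 1000000 in
/-- b = [[r, n], [0, r⁻¹]] ∈ AN is admissible iff r > 1 and
r² + r⁻² − |n|² > 2. -/
theorem su11_AN_admissible_iff
    (r : ℝ) (hr : 0 < r) (n : ℂ)
    (b : Matrix (Fin 2) (Fin 2) ℂ)
    (hb : b = !![(r : ℂ), n; 0, ((r⁻¹ : ℝ) : ℂ)]) :
    IsAdmissibleAN2 b ↔ (1 < r ∧ 2 < r ^ 2 + r⁻¹ ^ 2 - Complex.normSq n) := by
  subst hb
  constructor
  · rintro ⟨-, g, ⟨hgdet, hgJ⟩, lam, mu, hlt, hsum, hs⟩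
    rw [aux_sval r n] at hs
    have hmu : mu = -lam := by linarith
    have hlam : 0 < lam := by linarith
    subst hmu
    set E := Real.exp lam with hE
    have hE1 : 1 < E := Real.one_lt_exp_iff.mpr hlam
    have hEinv : Real.exp (-lam) = E⁻¹ := Real.exp_neg lam
    have hgu : IsUnit g.det := by rw [hgdet]; exact isUnit_one
    -- trace
    have htr : Matrix.trace (!![((r:ℂ))^2, r * n; -(r * (starRingEnd ℂ) n), ((r⁻¹:ℝ):ℂ)^2 - (normSq n : ℂ)]) = Matrix.trace (!![(Real.exp lam : ℂ), 0; 0, (Real.exp (-lam) : ℂ)] : Matrix (Fin 2) (Fin 2) ℂ) := by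
      rw [hs, Matrix.trace_mul_cycle, Matrix.mul_nonsing_inv g hgu, Matrix.one_mul]
    have htrR : r ^ 2 + r⁻¹ ^ 2 - normSq n = E + E⁻¹ := by
      rw [Matrix.trace_fin_two_of, Matrix.trace_fin_two_of, hEinv] at htr
      have : ((r ^ 2 + r⁻¹ ^ 2 - normSq n : ℝ) : ℂ) = ((E + E⁻¹ : ℝ) : ℂ) := by
        push_cast at htr ⊢
        rw [← Complex.ofReal_exp, ← hE] at htr
        linear_combination htr
      exact_mod_cast this
    -- the J-form equation
    have hginv : g⁻¹ = J2 * gᴴ * J2 := by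
      apply Matrix.inv_eq_left_inv
      calc (J2 * gᴴ * J2) * g = J2 * (gᴴ * J2 * g) := by
            simp only [Matrix.mul_assoc]
        _ = 1 := by rw [hgJ, aux_J2sq]
    have key : gᴴ * (J2 * !![(Real.exp lam : ℂ), 0; 0, (Real.exp (-lam) : ℂ)]) * g
        = J2 * !![((r:ℂ))^2, r * n; -(r * (starRingEnd ℂ) n), ((r⁻¹:ℝ):ℂ)^2 - (normSq n : ℂ)] := by
      rw [hs, hginv]
      simp only [← Matrix.mul_assoc]
      rw [aux_J2sq, Matrix.one_mul]
    have e00 := congrFun (congrFun key 0) 0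
    simp [Matrix.mul_apply, Fin.sum_univ_two, Matrix.vecMul, dotProduct,
      Matrix.conjTranspose_apply, J2, hEinv] at e00
    have j00 := congrFun (congrFun hgJ 0) 0
    simp [Matrix.mul_apply, Fin.sum_univ_two, Matrix.vecMul, dotProduct,
      Matrix.conjTranspose_apply, J2] at j00
    rw [← Complex.ofReal_exp, ← hE] at e00
    have hEpos : (0:ℝ) < E := lt_trans one_pos hE1
    have hEE : E * E⁻¹ = 1 := mul_inv_cancel₀ (ne_of_gt hEpos)
    have e00R : E * normSq (g 0 0) - E⁻¹ * normSq (g 1 0) = r ^ 2 := by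
      have : ((E * normSq (g 0 0) - E⁻¹ * normSq (g 1 0) : ℝ) : ℂ) = ((r ^ 2 : ℝ) : ℂ) := by
        push_cast [Complex.normSq_eq_conj_mul_self]
        linear_combination e00
      exact_mod_cast this
    have j00R : normSq (g 0 0) - normSq (g 1 0) = 1 := by
      have : ((normSq (g 0 0) - normSq (g 1 0) : ℝ) : ℂ) = ((1 : ℝ) : ℂ) := by
        push_cast [Complex.normSq_eq_conj_mul_self]
        linear_combination j00
      exact_mod_cast this
    have hn0 : 0 ≤ normSq (g 1 0) := normSq_nonneg _
    have hr2 : 1 < r ^ 2 := by nlinarith [mul_nonneg (sub_nonneg.mpr (le_of_lt hE1)) hn0, mul_pos hEpos hEpos]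
    constructor
    · nlinarith
    · rw [htrR]
      nlinarith
  · rintro ⟨hr1, ht2⟩
    have hbAN : !![(r : ℂ), n; 0, ((r⁻¹ : ℝ) : ℂ)] ∈ AN2 := by
      refine ⟨?_, by simp, by simp [hr], by simp [inv_pos.mpr hr]⟩
      rw [Matrix.det_fin_two_of]
      have hrne' : (r:ℂ) ≠ 0 := Complex.ofReal_ne_zero.mpr (ne_of_gt hr)
      push_cast
      field_simp
      simp
    refine ⟨hbAN, ?_⟩
    rw [IsAdmissibleQ2, aux_sval r n]
    have hrne : r ≠ 0 := ne_of_gt hr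
    set t : ℝ := r ^ 2 + r⁻¹ ^ 2 - normSq n with htdef
    clear_value t
    have hrr : r * r⁻¹ = 1 := mul_inv_cancel₀ hrne
    have ht4 : 0 ≤ t ^ 2 - 4 := by nlinarith
    set sq : ℝ := Real.sqrt (t ^ 2 - 4) with hsqdef
    clear_value sq
    have hsq : sq ^ 2 = t ^ 2 - 4 := by rw [hsqdef]; exact Real.sq_sqrt ht4
    have hsqnn : 0 ≤ sq := by rw [hsqdef]; exact Real.sqrt_nonneg _
    set E : ℝ := (t + sq) / 2 with hEdef
    clear_value E
    have hE1 : 1 < E := by rw [hEdef]; nlinarith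
    have hEpos : 0 < E := by linarith
    have hEne : E ≠ 0 := ne_of_gt hEpos
    set Ei : ℝ := E⁻¹ with hEidef
    clear_value Ei
    have hEE : E * Ei = 1 := by rw [hEidef]; exact mul_inv_cancel₀ hEne
    have hEival : Ei = (t - sq) / 2 := by
      rw [hEidef]
      exact inv_eq_of_mul_eq_one_right (by rw [hEdef]; linear_combination (-(1:ℝ)/4) * hsq)
    have hEt : E + Ei = t := by rw [hEdef, hEival]; ring
    have hEipos : 0 < Ei := by rw [hEidef]; positivity
    have hEilt : Ei < 1 := by nlinarith
    have hkey : (r ^ 2 - E) * (r ^ 2 - Ei) = r ^ 2 * normSq n := by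
      have h' : E + Ei = r ^ 2 + r⁻¹ ^ 2 - normSq n := by rw [hEt, htdef]
      nlinarith [h', hEE, hrr]
    have hrE : E ≤ r ^ 2 := by
      by_contra h
      push_neg at h
      have h2' : 0 < r ^ 2 - Ei := by nlinarith
      nlinarith [hkey, normSq_nonneg n, mul_pos (sub_pos.mpr h) h2', mul_pos hr hr]
    set d : ℝ := E - Ei with hddef
    clear_value d
    have hdpos : 0 < d := by rw [hddef]; linarith
    have hdne : d ≠ 0 := ne_of_gt hdpos
    set x : ℝ := (r ^ 2 - Ei) / d with hxdef
    clear_value x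
    have hx1 : 1 ≤ x := by rw [hxdef]; rw [le_div_iff₀ hdpos]; linarith
    have hxd : x * d = r ^ 2 - Ei := by rw [hxdef]; exact div_mul_cancel₀ _ hdne
    set a : ℝ := Real.sqrt x with hadef
    clear_value a
    have ha2 : a ^ 2 = x := by rw [hadef]; exact Real.sq_sqrt (by linarith)
    have hapos : 0 < a := by rw [hadef]; exact Real.sqrt_pos.mpr (by linarith)
    have hane : a ≠ 0 := ne_of_gt hapos
    set bb : ℂ := (r * n) / ((a : ℂ) * (d : ℂ)) with hbbdef
    clear_value bb
    have hADne : ((a : ℂ) * (d : ℂ)) ≠ 0 :=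
      mul_ne_zero (Complex.ofReal_ne_zero.mpr hane) (Complex.ofReal_ne_zero.mpr hdne)
    have h1c : (a:ℂ) ^ 2 * (d:ℂ) = (r:ℂ) ^ 2 - (Ei:ℂ) := by
      have hr' : a ^ 2 * d = r ^ 2 - Ei := by rw [ha2]; exact hxd
      have := congrArg (Complex.ofReal) hr'
      push_cast at this; exact this
    have h3c : (E:ℂ) * (Ei:ℂ) = 1 := by exact_mod_cast congrArg (Complex.ofReal) hEE
    have h4c : (E:ℂ) + (Ei:ℂ) = (r:ℂ) ^ 2 + ((r:ℂ)⁻¹) ^ 2 - n * (starRingEnd ℂ) n := by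
      have h' : E + Ei = r ^ 2 + r⁻¹ ^ 2 - normSq n := by rw [hEt, htdef]
      have := congrArg (Complex.ofReal) h'
      push_cast [Complex.normSq_eq_conj_mul_self] at this
      rw [this]
      ring
    have h5c : (r:ℂ) * (r:ℂ)⁻¹ = 1 :=
      mul_inv_cancel₀ (Complex.ofReal_ne_zero.mpr hrne)
    have hbc : (a:ℂ) * (d:ℂ) * bb = (r:ℂ) * n := by
      rw [hbbdef, mul_div_assoc']; exact mul_div_cancel_left₀ _ hADne
    have hcc : (a:ℂ) * (d:ℂ) * (starRingEnd ℂ) bb = (r:ℂ) * (starRingEnd ℂ) n := by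
      have := congrArg (starRingEnd ℂ) hbc
      simpa [Complex.conj_ofReal, mul_comm] using this
    have h2c : (d:ℂ) = (E:ℂ) - (Ei:ℂ) := by
      have := congrArg (Complex.ofReal) hddef
      push_cast at this; exact this
    have hdet2 : ((a:ℂ)) ^ 2 - bb * (starRingEnd ℂ) bb = 1 := by
      refine mul_left_cancel₀ (pow_ne_zero 2 hADne) ?_
      linear_combination (-((a:ℂ)*(d:ℂ)*(starRingEnd ℂ) bb)) * hbc - ((r:ℂ)*n) * hcc
        + ((a:ℂ)^2*(d:ℂ) - (d:ℂ) + (r:ℂ)^2 - (Ei:ℂ)) * h1c - ((r:ℂ)^2 - (Ei:ℂ)) * h2c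
        - (r:ℂ)^2 * h4c + h3c - ((r:ℂ)*(r:ℂ)⁻¹ + 1) * h5c
    set g : Matrix (Fin 2) (Fin 2) ℂ := !![(a:ℂ), bb; (starRingEnd ℂ) bb, (a:ℂ)] with hgdef
    clear_value g
    have hgdet : g.det = 1 := by
      rw [hgdef, Matrix.det_fin_two_of]
      linear_combination hdet2
    have hgJ : gᴴ * J2 * g = J2 := by
      rw [hgdef]
      ext i j
      fin_cases i <;> fin_cases j <;>
        simp [Matrix.mul_apply, Fin.sum_univ_two, Matrix.vecMul, dotProduct,
          Matrix.conjTranspose_apply, J2, Complex.conj_ofReal]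
      · linear_combination hdet2
      · ring
      · ring
      · linear_combination -hdet2
    refine ⟨g, ⟨hgdet, hgJ⟩, Real.log E, -Real.log E, ?_, by ring, ?_⟩
    · have := Real.log_pos hE1
      linarith
    · have hexp : Real.exp (Real.log E) = E := Real.exp_log hEpos
      have hexp2 : Real.exp (-Real.log E) = Ei := by
        rw [Real.exp_neg, hexp, hEidef]
      rw [hexp, hexp2]
      have hgivg : g⁻¹ * g = 1 := Matrix.nonsing_inv_mul g (by rw [hgdet]; exact isUnit_one)
      have hmain : g * !![((r:ℂ))^2, r * n; -(r * (starRingEnd ℂ) n), ((r⁻¹:ℝ):ℂ)^2 - (normSq n : ℂ)]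
          = !![(E:ℂ), 0; 0, (Ei:ℂ)] * g := by
        rw [hgdef]
        ext i j
        fin_cases i <;> fin_cases j <;>
          simp [Matrix.mul_apply, Fin.sum_univ_two, Matrix.vecMul, dotProduct,
            Complex.normSq_eq_conj_mul_self]
        · refine mul_left_cancel₀ hADne ?_
          linear_combination (-(r:ℂ)*(starRingEnd ℂ) n) * hbc + ((r:ℂ)^2 - (E:ℂ)) * h1c
            - (r:ℂ)^2 * h4c + h3c - ((r:ℂ)*(r:ℂ)⁻¹ + 1) * h5c
        · refine mul_left_cancel₀ hADne ?_
          linear_combination (((r:ℂ)⁻¹)^2 - n * (starRingEnd ℂ) n - (E:ℂ)) * hbc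
            + ((r:ℂ)*n) * h1c - ((r:ℂ)*n) * h4c
        · refine mul_left_cancel₀ hADne ?_
          linear_combination ((r:ℂ)^2 - (Ei:ℂ)) * hcc - ((r:ℂ)*(starRingEnd ℂ) n) * h1c
        · refine mul_left_cancel₀ hADne ?_
          linear_combination ((r:ℂ)*n) * hcc + (((r:ℂ)⁻¹)^2 - n * (starRingEnd ℂ) n - (Ei:ℂ)) * h1c
            + (Ei:ℂ) * h4c - h3c + ((r:ℂ)*(r:ℂ)⁻¹ + 1) * h5c
      calc !![((r:ℂ))^2, r * n; -(r * (starRingEnd ℂ) n), ((r⁻¹:ℝ):ℂ)^2 - (normSq n : ℂ)]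
          = (g⁻¹ * g) * !![((r:ℂ))^2, r * n; -(r * (starRingEnd ℂ) n), ((r⁻¹:ℝ):ℂ)^2 - (normSq n : ℂ)] := by
            rw [hgivg, Matrix.one_mul]
        _ = g⁻¹ * (g * !![((r:ℂ))^2, r * n; -(r * (starRingEnd ℂ) n), ((r⁻¹:ℝ):ℂ)^2 - (normSq n : ℂ)]) := by
            rw [Matrix.mul_assoc]
        _ = g⁻¹ * (!![(E:ℂ), 0; 0, (Ei:ℂ)] * g) := by rw [hmain]
        _ = g⁻¹ * !![(E:ℂ), 0; 0, (Ei:ℂ)] * g := by rw [Matrix.mul_assoc]
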